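/- Let l ≥ 4. Realize the root system Φ of type D_l concretely as Φ = {±eᵢ ± eⱼ : 1 ≤ i < j ≤ l} ⊂ ℚˡ with the standard inner product ⟨·,·⟩, let δ = e₁ + e₂, Φ₀ = {α ∈ Φ : ⟨α, δ⟩ = 0}, Φ₁ = {α ∈ Φ : ⟨α, δ⟩ = 1}, and let W₀ be the group generated by the reflections s_α for α ∈ Φ₀. Then W₀ acts transitively on the collection of 4-element subsets S ⊆ Φ₁ consisting of pairwise orthogonal roots. -/

import Mathlib

/-- The standard inner product on `ℚˡ`. -/
def ip {l : ℕ} (x y : Fin l → ℚ) : ℚ := ∑ i, x i * y i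

/-- The standard basis vector `eᵢ` of `ℚˡ`. -/
def ev {l : ℕ} (i : Fin l) : Fin l → ℚ := Pi.single i 1

/-- The root system of type `D_l`: `Φ = {±eᵢ ± eⱼ : i < j}`. -/
def PhiD (l : ℕ) : Set (Fin l → ℚ) :=
  {α | ∃ i j : Fin l, i < j ∧
    (α = ev i + ev j ∨ α = ev i - ev j ∨ α = -ev i + ev j ∨ α = -ev i - ev j)}

/-- The maximal root `δ = e₁ + e₂` of `D_l`. -/
def deltaD (l : ℕ) (hl : 4 ≤ l) : Fin l → ℚ :=
  ev ⟨0, by omega⟩ + ev ⟨1, by omega⟩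

/-- The roots orthogonal to `δ`. -/
def Phi0D (l : ℕ) (hl : 4 ≤ l) : Set (Fin l → ℚ) :=
  {α ∈ PhiD l | ip α (deltaD l hl) = 0}

/-- The roots with `⟨α, δ⟩ = 1`. -/
def Phi1D (l : ℕ) (hl : 4 ≤ l) : Set (Fin l → ℚ) :=
  {α ∈ PhiD l | ip α (deltaD l hl) = 1}

/-- The group `W₀` generated by the reflections `s_α`, `α ∈ Φ₀`. -/
def W0D (l : ℕ) (hl : 4 ≤ l) : Subgroup ((Fin l → ℚ) ≃ₗ[ℚ] (Fin l → ℚ)) :=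
  Subgroup.closure
    {g | ∃ α ∈ Phi0D l hl, ∀ x, g x = x - (2 * ip x α / ip α α) • α}

/- ### Auxiliary lemmas -/

lemma ip_ev_right {l : ℕ} (x : Fin l → ℚ) (t : Fin l) : ip x (ev t) = x t := by
  simp [ip, ev, Pi.single_apply]

lemma ip_add_left {l : ℕ} (x y z : Fin l → ℚ) : ip (x + y) z = ip x z + ip y z := by
  simp [ip, add_mul, Finset.sum_add_distrib]

lemma ip_add_right {l : ℕ} (x y z : Fin l → ℚ) : ip x (y + z) = ip x y + ip x z := by
  simp [ip, mul_add, Finset.sum_add_distrib]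

lemma ip_sub_left {l : ℕ} (x y z : Fin l → ℚ) : ip (x - y) z = ip x z - ip y z := by
  simp [ip, sub_mul, Finset.sum_sub_distrib]

lemma ip_sub_right {l : ℕ} (x y z : Fin l → ℚ) : ip x (y - z) = ip x y - ip x z := by
  simp [ip, mul_sub, Finset.sum_sub_distrib]

lemma ip_smul_left {l : ℕ} (c : ℚ) (x z : Fin l → ℚ) : ip (c • x) z = c * ip x z := by
  simp [ip, Finset.mul_sum, mul_assoc]

lemma ip_smul_right {l : ℕ} (c : ℚ) (x z : Fin l → ℚ) : ip x (c • z) = c * ip x z := by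
  simp [ip, Finset.mul_sum]; ring_nf; simp [mul_comm, mul_left_comm]

lemma ev_apply {l : ℕ} (a t : Fin l) : ev a t = if t = a then 1 else 0 := by
  simp [ev, Pi.single_apply]

lemma ip_ev_ev {l : ℕ} (a b : Fin l) : ip (ev a) (ev b) = if a = b then 1 else 0 := by
  rw [ip_ev_right, ev_apply]; simp [eq_comm]

/-- A root of the form `e_a + e·e_k`. -/
def rt {l : ℕ} (a k : Fin l) (e : ℚ) : Fin l → ℚ := ev a + e • ev k

lemma ip_delta {l : ℕ} (hl : 4 ≤ l) (x : Fin l → ℚ) :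
    ip x (deltaD l hl) = x ⟨0, by omega⟩ + x ⟨1, by omega⟩ := by
  rw [deltaD, ip_add_right, ip_ev_right, ip_ev_right]

lemma mem_Phi1 {l : ℕ} (hl : 4 ≤ l) {α : Fin l → ℚ} (h : α ∈ Phi1D l hl) :
    ∃ (a k : Fin l) (e : ℚ), (a = ⟨0, by omega⟩ ∨ a = ⟨1, by omega⟩) ∧ 2 ≤ k.val ∧
      (e = 1 ∨ e = -1) ∧ α = rt a k e := by
  obtain ⟨⟨i, j, hij, hc⟩, hip⟩ := h
  rw [ip_delta] at hip
  have hij' : i.val < j.val := hij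
  rcases hc with rfl | rfl | rfl | rfl <;>
    simp only [Pi.add_apply, Pi.sub_apply, Pi.neg_apply, ev_apply, Fin.ext_iff] at hip <;>
    split_ifs at hip with h1 h2 h3 h4 h5 h6 h7 h8 h9 h10 h11 h12 h13 h14 h15 h16 h17 h18 <;>
    first
      | omega
      | (refine ⟨i, j, 1, ?_, ?_, Or.inl rfl, ?_⟩ <;>
          first | (simp only [Fin.ext_iff, Fin.val_mk]; omega) | omega | (simp [rt]; done))
      | (refine ⟨i, j, -1, ?_, ?_, Or.inr rfl, ?_⟩ <;>
          first
            | (simp only [Fin.ext_iff, Fin.val_mk]; omega)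
            | omega
            | (simp [rt, sub_eq_add_neg]; done))
      | norm_num at hip

/- ### Swap reflections -/

/-- The linear automorphism of `ℚˡ` permuting coordinates `i` and `j`. -/
def swLE {l : ℕ} (i j : Fin l) : (Fin l → ℚ) ≃ₗ[ℚ] (Fin l → ℚ) where
  toFun x := x ∘ Equiv.swap i j
  invFun x := x ∘ Equiv.swap i j
  map_add' x y := rfl
  map_smul' c x := rfl
  left_inv x := by ext t; simp
  right_inv x := by ext t; simp

lemma swLE_apply {l : ℕ} (i j : Fin l) (x : Fin l → ℚ) (t : Fin l) :
    swLE i j x t = x (Equiv.swap i j t) := rfl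

lemma swLE_ev {l : ℕ} (i j t : Fin l) : swLE i j (ev t) = ev (Equiv.swap i j t) := by
  ext s
  rw [swLE_apply, ev_apply, ev_apply]
  by_cases h : Equiv.swap i j s = t
  · rw [if_pos h, if_pos (by rw [← h]; simp)]
  · rw [if_neg h, if_neg (by intro hs; apply h; rw [hs]; simp)]

lemma ev_lt_two {l : ℕ} (i : Fin l) (hi : 2 ≤ i.val) (t : Fin l) (ht : t.val < 2) :
    ev i t = 0 := by
  rw [ev_apply, if_neg]
  intro h; rw [Fin.ext_iff] at h; omega

lemma swLE_mem {l : ℕ} (hl : 4 ≤ l) (i j : Fin l) (hi : 2 ≤ i.val) (hj : 2 ≤ j.val) :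
    swLE i j ∈ W0D l hl := by
  by_cases hij : i = j
  · have : swLE i j = 1 := by
      subst hij; apply LinearEquiv.ext; intro x; ext t
      rw [swLE_apply, Equiv.swap_self]; rfl
    rw [this]; exact one_mem _
  · apply Subgroup.subset_closure
    refine ⟨ev i - ev j, ⟨?_, ?_⟩, ?_⟩
    · rcases lt_or_gt_of_ne hij with h | h
      · exact ⟨i, j, h, Or.inr (Or.inl rfl)⟩
      · refine ⟨j, i, h, Or.inr (Or.inr (Or.inl ?_))⟩
        abel
    · rw [ip_delta hl, Pi.sub_apply, Pi.sub_apply,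
        ev_lt_two i hi _ (by simp), ev_lt_two j hj _ (by simp),
        ev_lt_two i hi _ (by simp), ev_lt_two j hj _ (by simp)]
      ring
    · intro x
      have h1 : ip x (ev i - ev j) = x i - x j := by
        rw [ip_sub_right, ip_ev_right, ip_ev_right]
      have h2 : ip (ev i - ev j) (ev i - ev j) = 2 := by
        rw [ip_sub_right, ip_sub_left, ip_sub_left, ip_ev_right, ip_ev_right,
          ip_ev_right, ip_ev_right, ev_apply, ev_apply, ev_apply, ev_apply,
          if_pos rfl, if_pos rfl, if_neg (show i ≠ j from hij),
          if_neg (show j ≠ i from Ne.symm hij)]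
        ring
      rw [h1, h2]
      ext t
      rw [swLE_apply]
      have hij' : i ≠ j := hij
      rcases eq_or_ne t i with rfl | hti
      · rw [Equiv.swap_apply_left]
        simp only [Pi.sub_apply, Pi.smul_apply, smul_eq_mul, ev_apply]
        simp [hij']
      rcases eq_or_ne t j with rfl | htj
      · rw [Equiv.swap_apply_right]
        simp only [Pi.sub_apply, Pi.smul_apply, smul_eq_mul, ev_apply]
        simp [Ne.symm hij']
      · rw [Equiv.swap_apply_of_ne_of_ne hti htj]
        simp only [Pi.sub_apply, Pi.smul_apply, smul_eq_mul, ev_apply]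
        simp [hti, htj]

/- ### Orthogonality combinatorics -/

lemma ip_rt {l : ℕ} {a b k m : Fin l} {e e' : ℚ} (ha : a.val < 2) (hb : b.val < 2)
    (hk : 2 ≤ k.val) (hm : 2 ≤ m.val) :
    ip (rt a k e) (rt b m e') = (if a = b then 1 else 0) + e * e' * (if k = m then 1 else 0) := by
  have ham : a ≠ m := by intro h; rw [h] at ha; omega
  have hkb : k ≠ b := by intro h; rw [h] at hk; omega
  simp only [rt, ip_add_left, ip_add_right, ip_smul_left, ip_smul_right, ip_ev_ev,
    if_neg ham, if_neg hkb]
  ring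

lemma orth_pair {l : ℕ} {a b k m : Fin l} {e e' : ℚ} (ha : a.val < 2) (hb : b.val < 2)
    (hk : 2 ≤ k.val) (hm : 2 ≤ m.val) (he : e = 1 ∨ e = -1) (he' : e' = 1 ∨ e' = -1)
    (h : ip (rt a k e) (rt b m e') = 0) :
    (a = b ∧ k = m ∧ e' = -e) ∨ (a ≠ b ∧ k ≠ m) := by
  rw [ip_rt ha hb hk hm] at h
  by_cases hab : a = b <;> by_cases hkm : k = m <;>
    rcases he with rfl | rfl <;> rcases he' with rfl | rfl <;>
    simp [hab, hkm] at h ⊢ <;> norm_num at h ⊢ <;> tauto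

lemma bad3 {l : ℕ} {k1 k2 k3 : Fin l} {e1 e2 e3 : ℚ} (he1 : e1 = 1 ∨ e1 = -1)
    (p12 : k1 = k2 ∧ e2 = -e1) (p13 : k1 = k3 ∧ e3 = -e1) (p23 : k2 = k3 ∧ e3 = -e2) :
    False := by
  rcases he1 with rfl | rfl <;>
    [linarith [p12.2, p13.2, p23.2]; linarith [p12.2, p13.2, p23.2]]

lemma psame {l : ℕ} {a k m : Fin l} {e e' : ℚ}
    (p : (a = a ∧ k = m ∧ e' = -e) ∨ (a ≠ a ∧ k ≠ m)) : k = m ∧ e' = -e := by tauto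

lemma pdiff {l : ℕ} {a b k m : Fin l} {e e' : ℚ} (hab : a ≠ b)
    (p : (a = b ∧ k = m ∧ e' = -e) ∨ (a ≠ b ∧ k ≠ m)) : k ≠ m := by tauto

lemma ncard_four {α : Type*} {s : Set α} (h : s.ncard = 4) :
    ∃ a b c d, a ≠ b ∧ a ≠ c ∧ a ≠ d ∧ b ≠ c ∧ b ≠ d ∧ c ≠ d ∧ s = {a, b, c, d} := by
  have h4 : s.encard = 4 := by
    rw [Set.ncard_def, ← Nat.cast_inj (R := ℕ∞), Nat.cast_ofNat] at h
    rwa [ENat.coe_toNat] at h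
    rintro h'; simp [h'] at h
  obtain ⟨x, hx⟩ := Set.nonempty_of_encard_ne_zero (s := s) (by rw [h4]; simp)
  rw [← Set.insert_eq_of_mem hx, ← Set.insert_diff_singleton,
    Set.encard_insert_of_notMem (fun h ↦ h.2 rfl), (by exact rfl : (4 : ℕ∞) = 3 + 1),
    (show ∀ a b : ℕ∞, a + 1 = b + 1 ↔ a = b from
      fun a b => (ENat.add_left_injective_of_ne_top WithTop.one_ne_top).eq_iff), Set.encard_eq_three] at h4
  obtain ⟨y, z, w, hyz, hyw, hzw, hs⟩ := h4
  refine ⟨x, y, z, w, ?_, ?_, ?_, hyz, hyw, hzw, ?_⟩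
  · rintro rfl; exact (hs.symm.subset (Or.inl rfl)).2 rfl
  · rintro rfl; exact (hs.symm.subset (Or.inr (Or.inl rfl))).2 rfl
  · rintro rfl; exact (hs.symm.subset (Or.inr (Or.inr rfl))).2 rfl
  · rw [← hs, Set.insert_diff_singleton, Set.insert_eq_of_mem hx]

lemma key {l : ℕ} (hl : 4 ≤ l) {S : Set (Fin l → ℚ)} {k1 k2 k3 k4 : Fin l} {e1 e2 e3 e4 : ℚ}
    (hk1 : 2 ≤ k1.val) (hk3 : 2 ≤ k3.val)
    (he1 : e1 = 1 ∨ e1 = -1) (he3 : e3 = 1 ∨ e3 = -1)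
    (p12 : k1 = k2 ∧ e2 = -e1) (p34 : k3 = k4 ∧ e4 = -e3) (p13 : k1 ≠ k3)
    (hS : S = {rt ⟨0, by omega⟩ k1 e1, rt ⟨0, by omega⟩ k2 e2,
               rt ⟨1, by omega⟩ k3 e3, rt ⟨1, by omega⟩ k4 e4}) :
    ∃ k m : Fin l, 2 ≤ k.val ∧ 2 ≤ m.val ∧ k ≠ m ∧
      S = {rt ⟨0, by omega⟩ k 1, rt ⟨0, by omega⟩ k (-1),
           rt ⟨1, by omega⟩ m 1, rt ⟨1, by omega⟩ m (-1)} := by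
  obtain ⟨rfl, rfl⟩ := p12
  obtain ⟨rfl, rfl⟩ := p34
  refine ⟨k1, k3, hk1, hk3, p13, ?_⟩
  rw [hS]
  rcases he1 with rfl | rfl <;> rcases he3 with rfl | rfl <;> norm_num <;>
    · ext x; simp only [Set.mem_insert_iff, Set.mem_singleton_iff]; tauto

lemma perm1324 {α : Type*} (a b c d : α) : ({a, b, c, d} : Set α) = {a, c, b, d} := by
  ext x; simp only [Set.mem_insert_iff, Set.mem_singleton_iff]; tauto

lemma perm1423 {α : Type*} (a b c d : α) : ({a, b, c, d} : Set α) = {a, d, b, c} := by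
  ext x; simp only [Set.mem_insert_iff, Set.mem_singleton_iff]; tauto

lemma perm2314 {α : Type*} (a b c d : α) : ({a, b, c, d} : Set α) = {b, c, a, d} := by
  ext x; simp only [Set.mem_insert_iff, Set.mem_singleton_iff]; tauto

lemma perm2413 {α : Type*} (a b c d : α) : ({a, b, c, d} : Set α) = {b, d, a, c} := by
  ext x; simp only [Set.mem_insert_iff, Set.mem_singleton_iff]; tauto

lemma perm3412 {α : Type*} (a b c d : α) : ({a, b, c, d} : Set α) = {c, d, a, b} := by
  ext x; simp only [Set.mem_insert_iff, Set.mem_singleton_iff]; tauto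

set_option maxHeartbeats 2000000 in
lemma char {l : ℕ} (hl : 4 ≤ l) {S : Set (Fin l → ℚ)} (hS : S ⊆ Phi1D l hl)
    (hcard : S.ncard = 4) (horth : ∀ α ∈ S, ∀ β ∈ S, α ≠ β → ip α β = 0) :
    ∃ k m : Fin l, 2 ≤ k.val ∧ 2 ≤ m.val ∧ k ≠ m ∧
      S = {rt ⟨0, by omega⟩ k 1, rt ⟨0, by omega⟩ k (-1),
           rt ⟨1, by omega⟩ m 1, rt ⟨1, by omega⟩ m (-1)} := by
  obtain ⟨x1, x2, x3, x4, n12, n13, n14, n23, n24, n34, rfl⟩ := ncard_four hcard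
  have m1 : x1 ∈ ({x1, x2, x3, x4} : Set (Fin l → ℚ)) := by simp
  have m2 : x2 ∈ ({x1, x2, x3, x4} : Set (Fin l → ℚ)) := by simp
  have m3 : x3 ∈ ({x1, x2, x3, x4} : Set (Fin l → ℚ)) := by simp
  have m4 : x4 ∈ ({x1, x2, x3, x4} : Set (Fin l → ℚ)) := by simp
  obtain ⟨a1, k1, e1, ha1, hk1, he1, hx1⟩ := mem_Phi1 hl (hS m1)
  obtain ⟨a2, k2, e2, ha2, hk2, he2, hx2⟩ := mem_Phi1 hl (hS m2)
  obtain ⟨a3, k3, e3, ha3, hk3, he3, hx3⟩ := mem_Phi1 hl (hS m3)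
  obtain ⟨a4, k4, e4, ha4, hk4, he4, hx4⟩ := mem_Phi1 hl (hS m4)
  have hv1 : a1.val < 2 := by rcases ha1 with rfl | rfl <;> simp
  have hv2 : a2.val < 2 := by rcases ha2 with rfl | rfl <;> simp
  have hv3 : a3.val < 2 := by rcases ha3 with rfl | rfl <;> simp
  have hv4 : a4.val < 2 := by rcases ha4 with rfl | rfl <;> simp
  have p12 := orth_pair hv1 hv2 hk1 hk2 he1 he2
    (by rw [← hx1, ← hx2]; exact horth _ m1 _ m2 n12)
  have p13 := orth_pair hv1 hv3 hk1 hk3 he1 he3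
    (by rw [← hx1, ← hx3]; exact horth _ m1 _ m3 n13)
  have p14 := orth_pair hv1 hv4 hk1 hk4 he1 he4
    (by rw [← hx1, ← hx4]; exact horth _ m1 _ m4 n14)
  have p23 := orth_pair hv2 hv3 hk2 hk3 he2 he3
    (by rw [← hx2, ← hx3]; exact horth _ m2 _ m3 n23)
  have p24 := orth_pair hv2 hv4 hk2 hk4 he2 he4
    (by rw [← hx2, ← hx4]; exact horth _ m2 _ m4 n24)
  have p34 := orth_pair hv3 hv4 hk3 hk4 he3 he4
    (by rw [← hx3, ← hx4]; exact horth _ m3 _ m4 n34)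
  have hne : (⟨0, by omega⟩ : Fin l) ≠ ⟨1, by omega⟩ := by
    simp [Fin.ext_iff]
  rcases ha1 with rfl | rfl <;> rcases ha2 with rfl | rfl <;>
    rcases ha3 with rfl | rfl <;> rcases ha4 with rfl | rfl
  -- 0000
  · exact (bad3 he1 (psame p12) (psame p13) (psame p23)).elim
  -- 0001
  · exact (bad3 he1 (psame p12) (psame p13) (psame p23)).elim
  -- 0010
  · exact (bad3 he1 (psame p12) (psame p14) (psame p24)).elim
  -- 0011
  · exact key hl hk1 hk3 he1 he3 (psame p12) (psame p34) (pdiff hne p13)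
      (by rw [hx1, hx2, hx3, hx4])
  -- 0100
  · exact (bad3 he1 (psame p13) (psame p14) (psame p34)).elim
  -- 0101
  · exact key hl hk1 hk2 he1 he2 (psame p13) (psame p24) (pdiff hne p12)
      ((perm1324 x1 x2 x3 x4).trans (by rw [hx1, hx2, hx3, hx4]))
  -- 0110
  · exact key hl hk1 hk2 he1 he2 (psame p14) (psame p23) (pdiff hne p12)
      ((perm1423 x1 x2 x3 x4).trans (by rw [hx1, hx2, hx3, hx4]))
  -- 0111
  · exact (bad3 he2 (psame p23) (psame p24) (psame p34)).elim
  -- 1000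
  · exact (bad3 he2 (psame p23) (psame p24) (psame p34)).elim
  -- 1001
  · exact key hl hk2 hk1 he2 he1 (psame p23) (psame p14) ((pdiff (Ne.symm hne) p12).symm)
      ((perm2314 x1 x2 x3 x4).trans (by rw [hx1, hx2, hx3, hx4]))
  -- 1010
  · exact key hl hk2 hk1 he2 he1 (psame p24) (psame p13) ((pdiff (Ne.symm hne) p12).symm)
      ((perm2413 x1 x2 x3 x4).trans (by rw [hx1, hx2, hx3, hx4]))
  -- 1011
  · exact (bad3 he1 (psame p13) (psame p14) (psame p34)).elim
  -- 1100
  · exact key hl hk3 hk1 he3 he1 (psame p34) (psame p12) ((pdiff (Ne.symm hne) p13).symm)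
      ((perm3412 x1 x2 x3 x4).trans (by rw [hx1, hx2, hx3, hx4]))
  -- 1101
  · exact (bad3 he1 (psame p12) (psame p14) (psame p24)).elim
  -- 1110
  · exact (bad3 he1 (psame p12) (psame p13) (psame p23)).elim
  -- 1111
  · exact (bad3 he1 (psame p12) (psame p13) (psame p23)).elim

/-- `W₀` acts transitively on 4-element subsets of `Φ₁` consisting of
pairwise orthogonal roots. -/
theorem W0_transitive_on_orthogonal_quadruples (l : ℕ) (hl : 4 ≤ l)
    (S T : Set (Fin l → ℚ))
    (hS : S ⊆ Phi1D l hl) (hScard : S.ncard = 4)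
    (hSorth : ∀ α ∈ S, ∀ β ∈ S, α ≠ β → ip α β = 0)
    (hT : T ⊆ Phi1D l hl) (hTcard : T.ncard = 4)
    (hTorth : ∀ α ∈ T, ∀ β ∈ T, α ≠ β → ip α β = 0) :
    ∃ w ∈ W0D l hl, (fun x => w x) '' S = T := by
  obtain ⟨k, m, hk, hm, hkm, hSc⟩ := char hl hS hScard hSorth
  obtain ⟨k', m', hk', hm', hk'm', hTc⟩ := char hl hT hTcard hTorth
  set m1 : Fin l := Equiv.swap k k' m with hm1def
  have hm1 : 2 ≤ m1.val := by
    rw [hm1def, Equiv.swap_apply_def]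
    split_ifs <;> omega
  have hm1k' : m1 ≠ k' := by
    rw [hm1def]
    rcases eq_or_ne m k' with rfl | h
    · rw [Equiv.swap_apply_right]
      exact hkm
    · rw [Equiv.swap_apply_of_ne_of_ne (Ne.symm hkm) h]
      exact h
  refine ⟨swLE m1 m' * swLE k k',
    mul_mem (swLE_mem hl m1 m' hm1 hm') (swLE_mem hl k k' hk hk'), ?_⟩
  have hw : ∀ x, (swLE m1 m' * swLE k k') x = swLE m1 m' (swLE k k' x) := fun _ => rfl
  have wev : ∀ t : Fin l,
      (swLE m1 m' * swLE k k') (ev t) = ev (Equiv.swap m1 m' (Equiv.swap k k' t)) := by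
    intro t; rw [hw, swLE_ev, swLE_ev]
  have hlow : ∀ t : Fin l, t.val < 2 →
      (swLE m1 m' * swLE k k') (ev t) = ev t := by
    intro t ht
    have h1 : Equiv.swap k k' t = t :=
      Equiv.swap_apply_of_ne_of_ne (by simp only [Ne, Fin.ext_iff]; omega) (by simp only [Ne, Fin.ext_iff]; omega)
    have h2 : Equiv.swap m1 m' t = t :=
      Equiv.swap_apply_of_ne_of_ne (by simp only [Ne, Fin.ext_iff]; omega) (by simp only [Ne, Fin.ext_iff]; omega)
    rw [wev, h1, h2]
  have w0 : (swLE m1 m' * swLE k k') (ev (⟨0, by omega⟩ : Fin l)) = ev ⟨0, by omega⟩ :=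
    hlow _ (by simp)
  have w1 : (swLE m1 m' * swLE k k') (ev (⟨1, by omega⟩ : Fin l)) = ev ⟨1, by omega⟩ :=
    hlow _ (by simp)
  have wk : (swLE m1 m' * swLE k k') (ev k) = ev k' := by
    rw [wev, Equiv.swap_apply_left, Equiv.swap_apply_of_ne_of_ne (Ne.symm hm1k') hk'm']
  have wm : (swLE m1 m' * swLE k k') (ev m) = ev m' := by
    rw [wev, ← hm1def, Equiv.swap_apply_left]
  have wrt : ∀ (a b a' b' : Fin l) (e : ℚ),
      (swLE m1 m' * swLE k k') (ev a) = ev a' → (swLE m1 m' * swLE k k') (ev b) = ev b' →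
      (swLE m1 m' * swLE k k') (rt a b e) = rt a' b' e := by
    intro a b a' b' e hA hB
    rw [rt, map_add, map_smul, hA, hB, rt]
  rw [hSc, hTc]
  rw [Set.image_insert_eq, Set.image_insert_eq, Set.image_insert_eq, Set.image_singleton]
  rw [wrt _ _ _ _ _ w0 wk, wrt _ _ _ _ _ w0 wk, wrt _ _ _ _ _ w1 wm, wrt _ _ _ _ _ w1 wm]
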